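/- In a proper unital *-ring A with A_Σ salient and A_+A_+ ∩ A_sa ⊆ A_+: every a ∈ A_+ lies in the double commutant of {a^2}, i.e. every b ∈ A commuting with a^2 also commutes with a. -/

import Mathlib

open Pointwise

/-- Finite sums of elements of the form `star a * a`. -/
def sSums (A : Type*) [Ring A] [StarRing A] : Set A :=
  (AddSubmonoid.closure {x : A | ∃ a : A, x = star a * a} : Set A)

/-- The *-positive elements. -/
def pos (A : Type*) [Ring A] [StarRing A] : Set A :=
  {a : A | ∃ n : ℕ, 0 < n ∧ n • a ∈ sSums A}

/-- The *-accretive elements. -/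
def accr (A : Type*) [Ring A] [StarRing A] : Set A :=
  {a : A | a + star a ∈ pos A}

/-- The order `a ⪯ b ⟺ b - a ∈ 𝔯`. -/
def ple {A : Type*} [Ring A] [StarRing A] (a b : A) : Prop := b - a ∈ accr A

/-- The cone `𝔠`. -/
def cone (A : Type*) [Ring A] [StarRing A] : Set A :=
  {a : A | ∃ n : ℕ, 0 < n ∧ ple (star a * a) (n • a)}

/-- The ball `𝔅`. -/
def ball (A : Type*) [Ring A] [StarRing A] : Set A :=
  {a : A | ple (star a * a) 1}

section Aux

variable {A : Type*} [Ring A] [StarRing A]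

lemma my_gen_mem (x : A) : star x * x ∈ sSums A :=
  AddSubmonoid.subset_closure ⟨x, rfl⟩

lemma my_sSums_star {z : A} (hz : z ∈ sSums A) : star z = z := by
  induction hz using AddSubmonoid.closure_induction with
  | mem x h => obtain ⟨a, rfl⟩ := h; simp [mul_assoc]
  | zero => simp
  | add x y hx hy ihx ihy => simp [ihx, ihy]

lemma my_sSums_conj {z : A} (hz : z ∈ sSums A) (q : A) :
    star q * z * q ∈ sSums A := by
  induction hz using AddSubmonoid.closure_induction with
  | mem x h =>
      obtain ⟨a, rfl⟩ := h
      have : star q * (star a * a) * q = star (a * q) * (a * q) := by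
        simp [mul_assoc]
      rw [this]; exact my_gen_mem _
  | zero => simp only [mul_zero, zero_mul]; exact (AddSubmonoid.closure {x : A | ∃ a : A, x = star a * a}).zero_mem
  | add x y hx hy ihx ihy =>
      have : star q * (x + y) * q = star q * x * q + star q * y * q := by
        rw [mul_add, add_mul]
      rw [this]; exact (AddSubmonoid.closure _).add_mem ihx ihy

lemma my_mem_both_zero (salient : sSums A ∩ (-sSums A) = {0}) {z : A}
    (h1 : z ∈ sSums A) (h2 : -z ∈ sSums A) : z = 0 := by
  have : z ∈ sSums A ∩ (-sSums A) := ⟨h1, by simpa [Set.mem_neg] using h2⟩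
  rw [salient] at this
  simpa using this

lemma my_torsionfree (proper : ∀ a : A, star a * a = 0 → a = 0)
    (salient : sSums A ∩ (-sSums A) = {0}) {n : ℕ} (hn : 0 < n) {x : A}
    (hx : n • x = 0) : x = 0 := by
  have key : n • (star x * x) = 0 := by
    rw [← mul_smul_comm, hx, mul_zero]
  have hmem : star x * x ∈ sSums A := my_gen_mem x
  have hneg : -(star x * x) ∈ sSums A := by
    have h2 : (n - 1) • (star x * x) ∈ sSums A :=
      AddSubmonoid.nsmul_mem _ hmem _
    have : (n - 1) • (star x * x) = -(star x * x) := by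
      have hsucc : (n - 1) + 1 = n := Nat.succ_pred_eq_of_pos hn
      have := key
      rw [← hsucc, add_smul, one_smul] at this
      exact eq_neg_of_add_eq_zero_left this
    rwa [this] at h2
  exact proper _ (my_mem_both_zero salient hmem hneg)


lemma my_pos_antisym (proper : ∀ a : A, star a * a = 0 → a = 0)
    (salient : sSums A ∩ (-sSums A) = {0}) {s : A}
    (h1 : s ∈ pos A) (h2 : -s ∈ pos A) : s = 0 := by
  obtain ⟨n, hn, hns⟩ := h1
  obtain ⟨m, hm, hms⟩ := h2
  have e1 : (m * n) • s ∈ sSums A := by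
    rw [mul_smul]; exact AddSubmonoid.nsmul_mem _ hns _
  have e2 : -((m * n) • s) ∈ sSums A := by
    have : n • (m • (-s)) ∈ sSums A := AddSubmonoid.nsmul_mem _ hms _
    have h3 : n • (m • (-s)) = -((m * n) • s) := by
      rw [smul_neg, smul_neg, ← mul_smul, mul_comm]
    rwa [h3] at this
  exact my_torsionfree proper salient (Nat.mul_pos hm hn)
    (my_mem_both_zero salient e1 e2)

lemma my_pos_star (proper : ∀ a : A, star a * a = 0 → a = 0)
    (salient : sSums A ∩ (-sSums A) = {0}) {p : A} (hp : p ∈ pos A) :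
    star p = p := by
  obtain ⟨n, hn, hns⟩ := hp
  have : n • (star p - p) = 0 := by
    have h1 : star (n • p) = n • p := my_sSums_star hns
    rw [star_nsmul] at h1
    rw [smul_sub, h1, sub_self]
  exact sub_eq_zero.mp (my_torsionfree proper salient hn this)

lemma my_pos_conj {p : A} (hp : p ∈ pos A) (q : A) : star q * p * q ∈ pos A := by
  obtain ⟨n, hn, hns⟩ := hp
  refine ⟨n, hn, ?_⟩
  have : n • (star q * p * q) = star q * (n • p) * q := by
    rw [mul_smul_comm, smul_mul_assoc]
  rw [this]
  exact my_sSums_conj hns q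

lemma my_cancel (proper : ∀ a : A, star a * a = 0 → a = 0)
    (salient : sSums A ∩ (-sSums A) = {0}) {z : A} (hz : z ∈ sSums A) (q : A)
    (h0 : star q * z * q = 0) : z * q = 0 := by
  induction hz using AddSubmonoid.closure_induction with
  | mem x h =>
      obtain ⟨a, rfl⟩ := h
      have h1 : star (a * q) * (a * q) = 0 := by
        rw [← h0]; simp [mul_assoc]
      have := proper _ h1
      rw [mul_assoc, this, mul_zero]
  | zero => simp
  | add x y hx hy ihx ihy =>
      have hxm : star q * x * q ∈ sSums A := my_sSums_conj hx q
      have hym : star q * y * q ∈ sSums A := my_sSums_conj hy q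
      have hsum : star q * x * q + star q * y * q = 0 := by
        rw [← h0, mul_add, add_mul]
      have hx0 : star q * x * q = 0 := by
        refine my_mem_both_zero salient hxm ?_
        rw [neg_eq_of_add_eq_zero_left ?_]
        · exact hym
        · rw [add_comm]; exact hsum
      have hy0 : star q * y * q = 0 := by
        rwa [hx0, zero_add] at hsum
      rw [add_mul, ihx hx0, ihy hy0, add_zero]

/-- Key lemma: if `p` is positive and `c`, `star c` anticommute with `p`,
then `p * c = 0`. -/
lemma my_key (proper : ∀ a : A, star a * a = 0 → a = 0)
    (salient : sSums A ∩ (-sSums A) = {0})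
    (posmul : ∀ x : A, (∃ a ∈ pos A, ∃ b ∈ pos A, x = a * b) → star x = x → x ∈ pos A)
    {p c : A} (hp : p ∈ pos A) (sp : star p = p)
    (h1 : p * c + c * p = 0) (h2 : p * star c + star c * p = 0) :
    p * c = 0 := by
  have hcc : star c * c ∈ pos A := ⟨1, one_pos, by simpa using my_gen_mem c⟩
  -- t = star c * c * p
  have hcomm : star c * c * p = p * (star c * c) := by
    have e1 : c * p = -(p * c) := eq_neg_of_add_eq_zero_right h1
    have e2 : star c * p = -(p * star c) := eq_neg_of_add_eq_zero_right h2
    rw [mul_assoc, e1, mul_neg, ← mul_assoc, e2, neg_mul, neg_neg, mul_assoc]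
  have ht : star c * c * p ∈ pos A := by
    refine posmul _ ⟨_, hcc, _, hp, rfl⟩ ?_
    calc star (star c * c * p) = p * (star c * c) := by simp [sp, mul_assoc]
      _ = star c * c * p := hcomm.symm
  have htneg : -(star c * c * p) ∈ pos A := by
    have e1 : c * p = -(p * c) := eq_neg_of_add_eq_zero_right h1
    have : -(star c * c * p) = star c * p * c := by
      rw [mul_assoc, e1, mul_neg, neg_neg, ← mul_assoc]
    rw [this]
    exact my_pos_conj hp c
  have ht0 : star c * c * p = 0 := my_pos_antisym proper salient ht htneg
  have hcpc : star c * p * c = 0 := by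
    have e1 : c * p = -(p * c) := eq_neg_of_add_eq_zero_right h1
    have hrew : star c * c * p = -(star c * p * c) := by
      rw [mul_assoc, e1, mul_neg, ← mul_assoc]
    rw [hrew] at ht0
    exact neg_eq_zero.mp ht0
  obtain ⟨n, hn, hns⟩ := hp
  have hnz : star c * (n • p) * c = 0 := by
    rw [mul_smul_comm, smul_mul_assoc, hcpc, smul_zero]
  have := my_cancel proper salient hns c hnz
  rw [smul_mul_assoc] at this
  exact my_torsionfree proper salient hn this


lemma my_half (proper : ∀ a : A, star a * a = 0 → a = 0)
    (salient : sSums A ∩ (-sSums A) = {0})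
    (posmul : ∀ x : A, (∃ a ∈ pos A, ∃ b ∈ pos A, x = a * b) → star x = x → x ∈ pos A)
    {a : A} (ha : a ∈ pos A) (sa : star a = a) {h : A}
    (hcomm : h * (a * a) = (a * a) * h)
    (hstar : star h = h ∨ star h = -h) :
    a * h = h * a := by
  set c := a * h - h * a with hc
  have hanti : a * c + c * a = 0 := by
    have : a * c + c * a = a * a * h - h * (a * a) := by rw [hc]; noncomm_ring
    rw [this, hcomm, sub_self]
  have hstarc : star c = c ∨ star c = -c := by
    rcases hstar with hs | hs
    · right
      rw [hc]
      rw [star_sub, star_mul, star_mul, sa, hs]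
      noncomm_ring
    · left
      rw [hc]
      rw [star_sub, star_mul, star_mul, sa, hs]
      noncomm_ring
  have hantistar : a * star c + star c * a = 0 := by
    rcases hstarc with hs | hs <;> rw [hs]
    · exact hanti
    · rw [mul_neg, neg_mul, ← neg_add, hanti, neg_zero]
  have hac : a * c = 0 := my_key proper salient posmul ha sa hanti hantistar
  have hca : c * a = 0 := by
    have := hanti
    rw [hac, zero_add] at this
    exact this
  -- the element g
  set g := a * (h * h) - (h * h) * a with hg
  have hstarhh : star (h * h) = h * h := by
    rcases hstar with hs | hs <;> · rw [star_mul, hs]; try noncomm_ring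
  have hcomm2 : (h * h) * (a * a) = (a * a) * (h * h) := by
    calc (h * h) * (a * a) = h * (h * (a * a)) := mul_assoc h h (a * a)
      _ = h * ((a * a) * h) := by rw [hcomm]
      _ = (h * (a * a)) * h := (mul_assoc h (a * a) h).symm
      _ = ((a * a) * h) * h := by rw [hcomm]
      _ = (a * a) * (h * h) := mul_assoc (a * a) h h
  have hganti : a * g + g * a = 0 := by
    have : a * g + g * a = (a * a) * (h * h) - (h * h) * (a * a) := by
      rw [hg]; noncomm_ring
    rw [this, hcomm2, sub_self]
  have hgstar : star g = -g := by
    have e1 : star (a * (h * h)) = h * h * a := by rw [star_mul, hstarhh, sa]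
    have e2 : star (h * h * a) = a * (h * h) := by rw [star_mul, hstarhh, sa]
    rw [hg, star_sub, e1, e2, neg_sub]
  have hgantistar : a * star g + star g * a = 0 := by
    rw [hgstar, mul_neg, neg_mul, ← neg_add, hganti, neg_zero]
  have hag : a * g = 0 := my_key proper salient posmul ha sa hganti hgantistar
  -- c * c = a * g
  have hd : a * (a * h) - a * (h * a) = 0 := by
    have : a * (a * h) - a * (h * a) = a * c := by rw [hc]; noncomm_ring
    rw [this, hac]
  have hcc : c * c = 0 := by
    have hid : c * c - a * g =
        -(a * (a * h) - a * (h * a)) * h + h * -(a * (a * h) - a * (h * a)) := by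
      rw [hc, hg]; noncomm_ring
    rw [hd] at hid
    simp only [neg_zero, zero_mul, mul_zero, add_zero] at hid
    rw [hag] at hid
    exact sub_eq_zero.mp (by rw [hid])
  have hc0 : c = 0 := by
    apply proper
    rcases hstarc with hs | hs <;> rw [hs]
    · exact hcc
    · rw [neg_mul, hcc, neg_zero]
  rw [hc] at hc0
  exact sub_eq_zero.mp hc0

end Aux

theorem stmt18 {A : Type*} [Ring A] [StarRing A]
    (proper : ∀ a : A, star a * a = 0 → a = 0)
    (salient : sSums A ∩ (-sSums A) = {0})
    (posmul : ∀ x : A, (∃ a ∈ pos A, ∃ b ∈ pos A, x = a * b) → star x = x → x ∈ pos A)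
    (a : A) (ha : a ∈ pos A) (b : A) (hb : b * (a * a) = (a * a) * b) :
    b * a = a * b := by
  have sa : star a = a := my_pos_star proper salient ha
  have hb' : star b * (a * a) = (a * a) * star b := by
    have := congrArg star hb
    simp only [star_mul, sa] at this
    exact this.symm
  have hcomm1 : (b + star b) * (a * a) = (a * a) * (b + star b) := by
    rw [add_mul, mul_add, hb, hb']
  have hcomm2 : (b - star b) * (a * a) = (a * a) * (b - star b) := by
    rw [sub_mul, mul_sub, hb, hb']
  have hh : a * (b + star b) = (b + star b) * a :=
    my_half proper salient posmul ha sa hcomm1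
      (Or.inl (by rw [star_add, star_star, add_comm]))
  have hk : a * (b - star b) = (b - star b) * a :=
    my_half proper salient posmul ha sa hcomm2
      (Or.inr (by rw [star_sub, star_star]; noncomm_ring))
  have hsum : a * (b + b) = (b + b) * a := by
    have e : (b + star b) + (b - star b) = b + b := by abel
    calc a * (b + b) = a * ((b + star b) + (b - star b)) := by rw [e]
      _ = a * (b + star b) + a * (b - star b) := by rw [mul_add]
      _ = (b + star b) * a + (b - star b) * a := by rw [hh, hk]
      _ = ((b + star b) + (b - star b)) * a := (add_mul _ _ _).symm
      _ = (b + b) * a := by rw [e]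
  have h2 : (2 : ℕ) • (a * b - b * a) = 0 := by
    have h3 : (2 : ℕ) • (a * b - b * a) = a * (b + b) - (b + b) * a := by
      rw [two_smul, mul_add, add_mul]; abel
    rw [h3, hsum, sub_self]
  have := my_torsionfree proper salient (by norm_num : (0:ℕ) < 2) h2
  exact (sub_eq_zero.mp this).symm
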